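/- arXiv:2111.11835 — 2 statements merged into one kernel-verified Lean document; each statement's English description precedes it below -/
import Mathlib

section
/- For a functor Φ : A → V from an additive category to an abelian category and objects A_1, …, A_n of A, there is a natural direct sum decomposition Φ(⊕_{i=1}^n A_i) ≅ ⊕_{s=0}^n ⊕_{1 ≤ j_1 < … < j_s ≤ n} cr_s(Φ)(A_{j_1}, …, A_{j_s}). -/
open CategoryTheory CategoryTheory.Limits

noncomputable instance {V : Type*} [Category V] [Abelian V] : HasFiniteBiproducts V :=
  Abelian.hasFiniteBiproducts

variable {A : Type*} [Category A] [Preadditive A] [HasFiniteBiproducts A]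
variable {V : Type*} [Category V] [Abelian V]

/-- The cross effect `cr_ι(Φ)(B)` of a functor `Φ : A ⥤ V` at a finite family
`B : ι → A`: the kernel of the map `Φ(⨁ᵢ Bᵢ) ⟶ ⨁ᵢ Φ(⨁_{j ≠ i} Bⱼ)` induced by the
canonical projections. -/
noncomputable def crossEffect (Φ : A ⥤ V) {ι : Type} [Fintype ι] [DecidableEq ι]
    (B : ι → A) : V :=
  kernel (biproduct.lift fun i =>
    Φ.map (biproduct.lift fun j : {j : ι // j ≠ i} => biproduct.π B j.1))

namespace CrossEffectAux

open Finset

/-- the combinatorial heart: alternating sums over intervals in the subset lattice vanish. -/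
lemma comb {α : Type*} [DecidableEq α] (S T : Finset α) :
    (∑ R ∈ T.powerset, if S ⊆ R then (-1 : ℤ) ^ ((T \ R).card) else 0) =
      if S = T then 1 else 0 := by
  by_cases hST : S ⊆ T
  · rw [← Finset.sum_filter]
    have key : ∑ R ∈ T.powerset.filter (fun R => S ⊆ R), (-1 : ℤ) ^ ((T \ R).card) =
        ∑ W ∈ (T \ S).powerset, (-1 : ℤ) ^ W.card := by
      refine Finset.sum_nbij' (fun R => T \ R) (fun W => T \ W) ?_ ?_ ?_ ?_ ?_
      · intro R hR
        simp only [mem_filter, mem_powerset] at hR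
        exact mem_powerset.2 (sdiff_subset_sdiff le_rfl hR.2)
      · intro W hW
        simp only [mem_powerset] at hW
        refine Finset.mem_filter.2 ⟨mem_powerset.2 sdiff_subset, ?_⟩
        intro a ha
        simp only [mem_sdiff]
        refine ⟨hST ha, fun haW => ?_⟩
        exact (Finset.mem_sdiff.1 (hW haW)).2 ha
      · intro R hR
        simp only [mem_filter, mem_powerset] at hR
        exact Finset.sdiff_sdiff_eq_self hR.1
      · intro W hW
        simp only [mem_powerset] at hW
        exact Finset.sdiff_sdiff_eq_self (hW.trans sdiff_subset)
      · intro R _; rfl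
    rw [key, Finset.sum_powerset_neg_one_pow_card]
    by_cases h : S = T
    · subst h; simp
    · rw [if_neg h, if_neg]
      intro hempty
      exact h (Finset.Subset.antisymm hST (by
        intro a ha
        by_contra haS
        exact (Finset.eq_empty_iff_forall_notMem.1 hempty a)
          (Finset.mem_sdiff.2 ⟨ha, haS⟩)))
  · rw [if_neg (fun h : S = T => hST (by rw [h])), Finset.sum_eq_zero]
    intro R hR
    rw [if_neg]
    intro hSR
    exact hST (hSR.trans (mem_powerset.1 hR))

variable {n : ℕ} (As : Fin n → A)

/-- The idempotent of `⨁ As` projecting onto the coordinates in `S`. -/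
noncomputable def eMap (S : Finset (Fin n)) : (⨁ As) ⟶ (⨁ As) :=
  ∑ i ∈ S, biproduct.π As i ≫ biproduct.ι As i

/-- Inclusion of the partial biproduct. -/
noncomputable def inMap (S : Finset (Fin n)) : (⨁ fun j : S => As j) ⟶ ⨁ As :=
  biproduct.desc fun j => biproduct.ι As j.1

/-- Projection onto the partial biproduct. -/
noncomputable def rMap (S : Finset (Fin n)) : (⨁ As) ⟶ ⨁ fun j : S => As j :=
  biproduct.lift fun j => biproduct.π As j.1

/-- The idempotent of `⨁_{j ∈ S} As j` projecting onto the coordinates in `R`. -/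
noncomputable def ePrime (S R : Finset (Fin n)) :
    (⨁ fun j : S => As j) ⟶ (⨁ fun j : S => As j) :=
  ∑ j ∈ Finset.univ.filter (fun j : S => (j : Fin n) ∈ R),
    biproduct.π (fun j : S => As j) j ≫ biproduct.ι (fun j : S => As j) j

lemma ι_eMap (S : Finset (Fin n)) (i : Fin n) :
    biproduct.ι As i ≫ eMap As S = if i ∈ S then biproduct.ι As i else 0 := by
  rw [eMap, Preadditive.comp_sum]
  rw [Finset.sum_congr rfl (fun k _ => by
    rw [← Category.assoc, biproduct.ι_π])]
  simp [dite_comp]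

lemma eMap_π (S : Finset (Fin n)) (i : Fin n) :
    eMap As S ≫ biproduct.π As i = if i ∈ S then biproduct.π As i else 0 := by
  rw [eMap, Preadditive.sum_comp]
  rw [Finset.sum_congr rfl (fun k _ => by
    rw [Category.assoc, biproduct.ι_π])]
  simp [comp_dite]

lemma eMap_comp (S T : Finset (Fin n)) :
    eMap As S ≫ eMap As T = eMap As (S ∩ T) := by
  apply biproduct.hom_ext
  intro j
  by_cases hT : j ∈ T <;> by_cases hS : j ∈ S <;>
    simp [eMap_π, hT, hS, Finset.mem_inter]

lemma eMap_univ : eMap As Finset.univ = 𝟙 (⨁ As) := biproduct.total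

lemma inMap_rMap (S : Finset (Fin n)) : inMap As S ≫ rMap As S = 𝟙 _ := by
  apply biproduct.hom_ext
  intro j
  apply biproduct.hom_ext'
  intro k
  by_cases h : k = j
  · subst h; simp [inMap, rMap]
  · have h' : (k : Fin n) ≠ (j : Fin n) := fun hh => h (Subtype.ext hh)
    simp [inMap, rMap, biproduct.ι_π_ne _ h, biproduct.ι_π_ne _ h']

lemma rMap_inMap (S : Finset (Fin n)) : rMap As S ≫ inMap As S = eMap As S := by
  have : rMap As S ≫ inMap As S =
      rMap As S ≫ (∑ j : S, biproduct.π (fun j : S => As j) j ≫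
        biproduct.ι (fun j : S => As j) j) ≫ inMap As S := by
    rw [biproduct.total]; simp
  rw [this, Preadditive.sum_comp, Preadditive.comp_sum, eMap, ← Finset.sum_coe_sort S]
  refine Finset.sum_congr rfl fun j _ => ?_
  simp [rMap, inMap]

lemma ι_ePrime (S R : Finset (Fin n)) (j : S) :
    biproduct.ι (fun j : S => As j) j ≫ ePrime As S R =
      if (j : Fin n) ∈ R then biproduct.ι (fun j : S => As j) j else 0 := by
  rw [ePrime, Preadditive.comp_sum]
  rw [Finset.sum_congr rfl (fun k _ => by
    rw [← Category.assoc, biproduct.ι_π])]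
  simp [dite_comp]

lemma inMap_eMap (S T : Finset (Fin n)) :
    inMap As S ≫ eMap As T = ePrime As S T ≫ inMap As S := by
  apply biproduct.hom_ext'
  intro j
  rw [← Category.assoc, ← Category.assoc, ι_ePrime]
  simp only [inMap, biproduct.ι_desc]
  rw [ι_eMap]
  by_cases h : (j : Fin n) ∈ T <;> simp [h]

lemma ePrime_of_subset (S R : Finset (Fin n)) (h : S ⊆ R) :
    ePrime As S R = 𝟙 _ := by
  have hfilter : Finset.univ.filter (fun j : S => (j : Fin n) ∈ R) = Finset.univ := by
    ext j
    simp [h j.2]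
  rw [ePrime, hfilter]
  exact biproduct.total

lemma ePrime_factor (S R : Finset (Fin n)) (i : S) (h : (i : Fin n) ∉ R) :
    ePrime As S R =
      (biproduct.lift fun j : {j : S // j ≠ i} => biproduct.π (fun j : S => As j) j.1) ≫
      (biproduct.desc fun j : {j : S // j ≠ i} =>
        if ((j : S) : Fin n) ∈ R then biproduct.ι (fun j : S => As j) j.1 else 0) := by
  apply biproduct.hom_ext'
  intro j
  rw [ι_ePrime, biproduct.lift_desc, Preadditive.comp_sum]
  by_cases hji : j = i
  · subst hji
    rw [if_neg h, eq_comm]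
    refine Finset.sum_eq_zero fun k _ => ?_
    rw [← Category.assoc, biproduct.ι_π_ne _ (Ne.symm k.2), zero_comp]
  · have hmain : ∀ k : {k : S // k ≠ i}, k ≠ ⟨j, hji⟩ →
        biproduct.ι (fun j : S => As j) j ≫ (biproduct.π (fun j : S => As j) k.1 ≫
          (if ((k : S) : Fin n) ∈ R then biproduct.ι (fun j : S => As j) k.1 else 0)) = 0 := by
      intro k hk
      rw [← Category.assoc, biproduct.ι_π_ne _ (fun hh => hk (Subtype.ext hh.symm)), zero_comp]
    rw [Fintype.sum_eq_single _ hmain, ← Category.assoc, biproduct.ι_π_self, Category.id_comp]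

/-- second combinatorial lemma: sign measured in the varying subset. -/
lemma comb2 {α : Type*} [DecidableEq α] (T W : Finset α) :
    (∑ S ∈ W.powerset, if T ⊆ S then (-1 : ℤ) ^ ((S \ T).card) else 0) =
      if T = W then 1 else 0 := by
  by_cases hTW : T ⊆ W
  · rw [← Finset.sum_filter]
    have key : ∑ S ∈ W.powerset.filter (fun S => T ⊆ S), (-1 : ℤ) ^ ((S \ T).card) =
        ∑ U ∈ (W \ T).powerset, (-1 : ℤ) ^ U.card := by
      refine Finset.sum_nbij' (fun S => S \ T) (fun U => U ∪ T) ?_ ?_ ?_ ?_ ?_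
      · intro S hS
        simp only [Finset.mem_filter, Finset.mem_powerset] at hS
        exact Finset.mem_powerset.2 (Finset.sdiff_subset_sdiff hS.1 le_rfl)
      · intro U hU
        simp only [Finset.mem_powerset] at hU
        refine Finset.mem_filter.2 ⟨Finset.mem_powerset.2 ?_, Finset.subset_union_right⟩
        exact Finset.union_subset (hU.trans Finset.sdiff_subset) hTW
      · intro S hS
        simp only [Finset.mem_filter, Finset.mem_powerset] at hS
        exact Finset.sdiff_union_of_subset hS.2
      · intro U hU
        simp only [Finset.mem_powerset] at hU
        show (U ∪ T) \ T = U
        rw [Finset.union_sdiff_right, Finset.sdiff_eq_self_of_disjoint]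
        exact Finset.disjoint_left.2 fun a haU haT =>
          (Finset.mem_sdiff.1 (hU haU)).2 haT
      · intro S _; rfl
    rw [key, Finset.sum_powerset_neg_one_pow_card]
    by_cases h : T = W
    · subst h; simp
    · rw [if_neg h, if_neg]
      intro hempty
      exact h (Finset.Subset.antisymm hTW (fun a ha => by
        by_contra haT
        exact (Finset.eq_empty_iff_forall_notMem.1 hempty a)
          (Finset.mem_sdiff.2 ⟨ha, haT⟩)))
  · rw [if_neg (fun h : T = W => hTW (by rw [h])), Finset.sum_eq_zero]
    intro S hS
    rw [if_neg]
    intro hTS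
    exact hTW (hTS.trans (Finset.mem_powerset.1 hS))

variable (Φ : A ⥤ V)

/-- The map whose kernel is the cross effect of the partial family over `S`. -/
noncomputable def dm (S : Finset (Fin n)) :
    Φ.obj (⨁ fun j : S => As j) ⟶
      ⨁ fun i : S => Φ.obj (⨁ fun j : {j : S // j ≠ i} => As j.1) :=
  biproduct.lift fun i =>
    Φ.map (biproduct.lift fun j : {j : S // j ≠ i} => biproduct.π (fun j : S => As j) j.1)

/-- The alternating-sum idempotent of `Φ(⨁ As)` attached to `S`. -/
noncomputable def qMap (S : Finset (Fin n)) : Φ.obj (⨁ As) ⟶ Φ.obj (⨁ As) :=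
  ∑ T ∈ S.powerset, ((-1 : ℤ) ^ ((S \ T).card)) • Φ.map (eMap As T)

lemma qMap_eMap_self (S : Finset (Fin n)) :
    qMap As Φ S ≫ Φ.map (eMap As S) = qMap As Φ S := by
  rw [qMap, Preadditive.sum_comp]
  refine Finset.sum_congr rfl fun T hT => ?_
  rw [Preadditive.zsmul_comp, ← Φ.map_comp, eMap_comp,
    Finset.inter_eq_left.2 (Finset.mem_powerset.1 hT)]

lemma qMap_eMap_erase (S : Finset (Fin n)) (i : Fin n) (hi : i ∈ S) :
    qMap As Φ S ≫ Φ.map (eMap As (S.erase i)) = 0 := by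
  have hnot : i ∉ S.erase i := Finset.notMem_erase i S
  have hins : insert i (S.erase i) = S := Finset.insert_erase hi
  rw [qMap, Preadditive.sum_comp, ← hins, Finset.erase_insert hnot, Finset.sum_powerset_insert hnot,
    ← Finset.sum_add_distrib]
  refine Finset.sum_eq_zero fun T hT => ?_
  have hT' : T ⊆ S.erase i := Finset.mem_powerset.1 hT
  have hiT : i ∉ T := fun hmem => hnot (hT' hmem)
  rw [Preadditive.zsmul_comp, Preadditive.zsmul_comp, ← Φ.map_comp, ← Φ.map_comp,
    eMap_comp, eMap_comp,
    Finset.inter_eq_left.2 hT',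
    show insert i T ∩ S.erase i = T by
      rw [Finset.insert_inter_of_notMem hnot, Finset.inter_eq_left.2 hT']]
  have hc : (insert i (S.erase i) \ T).card = (insert i (S.erase i) \ insert i T).card + 1 := by
    rw [Finset.sdiff_insert, ← Finset.card_erase_add_one
      (Finset.mem_sdiff.2 ⟨Finset.mem_insert_self i _, hiT⟩)]
  rw [← add_smul, hc, pow_succ]
  simp

lemma sum_qMap : ∑ S : Finset (Fin n), qMap As Φ S = 𝟙 (Φ.obj (⨁ As)) := by
  have h1 : ∀ S : Finset (Fin n), qMap As Φ S =
      ∑ T : Finset (Fin n),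
        if T ⊆ S then ((-1 : ℤ) ^ ((S \ T).card)) • Φ.map (eMap As T) else 0 := by
    intro S
    rw [qMap, eq_comm]
    simp_rw [← Finset.mem_powerset]
    rw [Finset.sum_ite_mem, Finset.univ_inter]
  rw [Finset.sum_congr rfl fun S _ => h1 S, Finset.sum_comm]
  have h2 : ∀ T : Finset (Fin n),
      (∑ S : Finset (Fin n),
        if T ⊆ S then ((-1 : ℤ) ^ ((S \ T).card)) • Φ.map (eMap As T) else 0) =
      if T = Finset.univ then Φ.map (eMap As T) else 0 := by
    intro T
    have hsum : (∑ S : Finset (Fin n),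
        if T ⊆ S then ((-1 : ℤ) ^ ((S \ T).card)) • Φ.map (eMap As T) else 0) =
        (∑ S : Finset (Fin n), if T ⊆ S then ((-1 : ℤ) ^ ((S \ T).card)) else 0) •
          Φ.map (eMap As T) := by
      rw [Finset.sum_smul]
      refine Finset.sum_congr rfl fun S _ => ?_
      by_cases h : T ⊆ S <;> simp [h]
    rw [hsum, ← Finset.powerset_univ, comb2]
    by_cases h : T = Finset.univ <;> simp [h]
  rw [Finset.sum_congr rfl fun T _ => h2 T, Finset.sum_ite_eq' Finset.univ Finset.univ
    fun T => Φ.map (eMap As T), if_pos (Finset.mem_univ _), eMap_univ, Φ.map_id]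

lemma kernelι_ePrime (S R : Finset (Fin n)) :
    kernel.ι (dm As Φ S) ≫ Φ.map (ePrime As S R) =
      if S ⊆ R then kernel.ι (dm As Φ S) else 0 := by
  by_cases h : S ⊆ R
  · rw [if_pos h, ePrime_of_subset As S R h, Φ.map_id, Category.comp_id]
  · rw [if_neg h]
    obtain ⟨i, hiS, hiR⟩ := Finset.not_subset.1 h
    rw [ePrime_factor As S R ⟨i, hiS⟩ hiR, Φ.map_comp, ← Category.assoc]
    have hz : kernel.ι (dm As Φ S) ≫ Φ.map (biproduct.lift fun j : {j : S // j ≠ ⟨i, hiS⟩} =>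
        biproduct.π (fun j : S => As j) j.1) = 0 := by
      have h2 := kernel.condition (dm As Φ S) =≫ biproduct.π _ (⟨i, hiS⟩ : S)
      rw [zero_comp, Category.assoc, dm, biproduct.lift_π] at h2
      exact h2
    rw [hz, zero_comp]

lemma kernelι_qMap (S T : Finset (Fin n)) :
    kernel.ι (dm As Φ S) ≫ Φ.map (inMap As S) ≫ qMap As Φ T =
      if S = T then kernel.ι (dm As Φ S) ≫ Φ.map (inMap As S) else 0 := by
  have hterm : ∀ R, kernel.ι (dm As Φ S) ≫ Φ.map (inMap As S) ≫ Φ.map (eMap As R) =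
      if S ⊆ R then kernel.ι (dm As Φ S) ≫ Φ.map (inMap As S) else 0 := by
    intro R
    rw [← Φ.map_comp, inMap_eMap, Φ.map_comp, ← Category.assoc, kernelι_ePrime]
    by_cases h : S ⊆ R <;> simp [h]
  calc kernel.ι (dm As Φ S) ≫ Φ.map (inMap As S) ≫ qMap As Φ T
      = ∑ R ∈ T.powerset, ((-1 : ℤ) ^ ((T \ R).card)) •
          (kernel.ι (dm As Φ S) ≫ Φ.map (inMap As S) ≫ Φ.map (eMap As R)) := by
        simp only [qMap, Preadditive.comp_sum, Preadditive.comp_zsmul]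
    _ = (∑ R ∈ T.powerset, if S ⊆ R then ((-1 : ℤ) ^ ((T \ R).card)) else 0) •
          (kernel.ι (dm As Φ S) ≫ Φ.map (inMap As S)) := by
        rw [Finset.sum_smul]
        refine Finset.sum_congr rfl fun R _ => ?_
        rw [hterm R]
        by_cases h : S ⊆ R <;> simp [h]
    _ = _ := by
        rw [comb]
        by_cases h : S = T <;> simp [h]

lemma qMap_rMap_dm (T : Finset (Fin n)) :
    (qMap As Φ T ≫ Φ.map (rMap As T)) ≫ dm As Φ T = 0 := by
  rw [Category.assoc, dm]
  apply biproduct.hom_ext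
  intro i
  rw [Category.assoc, Category.assoc, biproduct.lift_π, zero_comp, ← Φ.map_comp]
  have hfac : rMap As T ≫ (biproduct.lift fun j : {j : T // j ≠ i} =>
      biproduct.π (fun j : T => As j) j.1) =
      eMap As (T.erase i) ≫ rMap As T ≫ biproduct.lift fun j : {j : T // j ≠ i} =>
        biproduct.π (fun j : T => As j) j.1 := by
    apply biproduct.hom_ext
    intro k
    simp only [rMap, Category.assoc, biproduct.lift_π]
    rw [eMap_π, if_pos (Finset.mem_erase.2 ⟨fun hh => k.2 (Subtype.ext hh), k.1.2⟩)]
  rw [hfac, Φ.map_comp, ← Category.assoc, qMap_eMap_erase As Φ T i.1 i.2, zero_comp]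

end CrossEffectAux

/-- The natural direct sum decomposition
`Φ(⊕_{i=1}^n Aᵢ) ≅ ⊕_{s=0}^n ⊕_{j₁ < ⋯ < j_s} cr_s(Φ)(A_{j₁}, …, A_{j_s})`,
where the right-hand side is indexed by the subsets `S ⊆ {1,…,n}`. -/
theorem crossEffect_decomposition (Φ : A ⥤ V) (n : ℕ) (As : Fin n → A) :
    Nonempty (Φ.obj (⨁ As) ≅ ⨁ fun S : Finset (Fin n) =>
      crossEffect Φ (fun j : S => As j)) := by
  classical
  open CrossEffectAux in
  refine ⟨⟨biproduct.lift (fun S : Finset (Fin n) =>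
      (kernel.lift (dm As Φ S) (qMap As Φ S ≫ Φ.map (rMap As S)) (qMap_rMap_dm As Φ S) :
        Φ.obj (⨁ As) ⟶ crossEffect Φ (fun j : S => As j))),
    biproduct.desc (fun S : Finset (Fin n) =>
      ((kernel.ι (dm As Φ S) ≫ Φ.map (inMap As S)) :
        crossEffect Φ (fun j : S => As j) ⟶ Φ.obj (⨁ As))), ?_, ?_⟩⟩
  · erw [biproduct.lift_desc]
    have hterm : ∀ S : Finset (Fin n),
        (kernel.lift (dm As Φ S) (qMap As Φ S ≫ Φ.map (rMap As S)) (qMap_rMap_dm As Φ S) :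
          Φ.obj (⨁ As) ⟶ crossEffect Φ (fun j : S => As j)) ≫
          (kernel.ι (dm As Φ S) ≫ Φ.map (inMap As S)) = qMap As Φ S := by
      intro S
      rw [← Category.assoc, kernel.lift_ι, Category.assoc, ← Φ.map_comp, rMap_inMap,
        qMap_eMap_self]
    exact (Finset.sum_congr rfl fun S _ => hterm S).trans (sum_qMap As Φ)
  · apply biproduct.hom_ext'
    intro S
    apply biproduct.hom_ext
    intro T
    erw [← Category.assoc, biproduct.ι_desc, Category.assoc, biproduct.lift_π,
      Category.comp_id, ← cancel_mono (kernel.ι (dm As Φ T)), Category.assoc, Category.assoc,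
      kernel.lift_ι]
    by_cases h : S = T
    · subst h
      erw [biproduct.ι_π_self, Category.id_comp,
        reassoc_of% (kernelι_qMap As Φ S S), if_true, Category.assoc, ← Φ.map_comp,
        inMap_rMap, Φ.map_id, Category.comp_id]
    · erw [biproduct.ι_π_ne _ h, zero_comp,
        reassoc_of% (kernelι_qMap As Φ S T), if_neg h, zero_comp]
      rfl
end

section
/- Let C = ⟨t⟩ be the infinite cyclic group, I the augmentation ideal of Q[C] = Q[t, t⁻¹], and M = Q[C] ⊗ V a free Q[C]-module on a finite-dimensional Q-vector space V. Then for every n ≥ 1, H_1(C, Λⁿ(M)) = 0, i.e. the n-th exterior power of M has no nonzero invariants under the action of t. -/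
open scoped TensorProduct

set_option maxHeartbeats 1000000
set_option synthInstance.maxHeartbeats 400000
set_option maxRecDepth 4000

noncomputable section NoInvAux

open LaurentPolynomial ExteriorAlgebra

variable (V : Type) [AddCommGroup V] [Module ℚ V]

local notation "LP" => LaurentPolynomial ℚ

/-- The module `M = ℚ[t,t⁻¹] ⊗ V`. -/
abbrev NIMod := (LaurentPolynomial ℚ) ⊗[ℚ] V

/-- The exterior algebra of `M`. -/
abbrev NIExt := ExteriorAlgebra ℚ (NIMod V)

/-- For `k : ℤ`, the linear map `v ↦ t^k ⊗ ι (t^k ⊗ v)`. -/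
def NIg (k : ℤ) : V →ₗ[ℚ] (LP ⊗[ℚ] NIExt V) :=
  (TensorProduct.mk ℚ LP (NIExt V) (T k)).comp
    ((ExteriorAlgebra.ι ℚ).comp (TensorProduct.mk ℚ LP V (T k)))

lemma NIg_apply (k : ℤ) (v : V) :
    NIg V k v = (T k : LP) ⊗ₜ[ℚ] ExteriorAlgebra.ι ℚ ((T k : LP) ⊗ₜ[ℚ] v) := rfl

/-- The degree-marking linear map `θ : M → L ⊗ Λ M`, `t^k ⊗ v ↦ t^k ⊗ ι(t^k ⊗ v)`. -/
def NItheta : NIMod V →ₗ[ℚ] LP ⊗[ℚ] NIExt V :=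
  TensorProduct.lift ((Finsupp.lsum ℚ fun k => LinearMap.toSpanSingleton ℚ _ (NIg V k)) ∘ₗ
    (AddMonoidAlgebra.coeffLinearEquiv ℚ : LP ≃ₗ[ℚ] (ℤ →₀ ℚ)).toLinearMap)

lemma NItheta_single (k : ℤ) (c : ℚ) (v : V) :
    NItheta V ((AddMonoidAlgebra.single k c : LP) ⊗ₜ[ℚ] v)
      = c • ((T k : LP) ⊗ₜ[ℚ] ExteriorAlgebra.ι ℚ ((T k : LP) ⊗ₜ[ℚ] v)) := by
  rw [NItheta, TensorProduct.lift.tmul]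
  change (Finsupp.lsum ℚ fun k => LinearMap.toSpanSingleton ℚ _ (NIg V k)) (Finsupp.single k c) v = _
  erw [Finsupp.lsum_single]
  rw [LinearMap.toSpanSingleton_apply, LinearMap.smul_apply, NIg_apply]

lemma NItheta_T (k : ℤ) (v : V) :
    NItheta V ((T k : LP) ⊗ₜ[ℚ] v)
      = (T k : LP) ⊗ₜ[ℚ] ExteriorAlgebra.ι ℚ ((T k : LP) ⊗ₜ[ℚ] v) := by
  have h := NItheta_single V k 1 v
  rw [one_smul] at h
  exact h

lemma NIspan : Submodule.span ℚ
    (Set.range fun p : ℤ × V => ((T p.1 : LP) ⊗ₜ[ℚ] p.2 : NIMod V)) = ⊤ := by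
  rw [Submodule.eq_top_iff']
  intro m
  induction m using TensorProduct.induction_on with
  | zero => exact Submodule.zero_mem _
  | add a b ha hb => exact Submodule.add_mem _ ha hb
  | tmul f v =>
      induction f using AddMonoidAlgebra.induction_linear with
      | zero =>
          rw [TensorProduct.zero_tmul]
          exact Submodule.zero_mem _
      | add f g hf hg =>
          rw [TensorProduct.add_tmul]
          exact Submodule.add_mem _ hf hg
      | single k c =>
          have h1 : ((AddMonoidAlgebra.single k c : LP) ⊗ₜ[ℚ] v : NIMod V)
              = c • ((T k : LP) ⊗ₜ[ℚ] v) := by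
            rw [TensorProduct.smul_tmul', LaurentPolynomial.T, AddMonoidAlgebra.smul_single,
              smul_eq_mul, mul_one]
          rw [h1]
          exact Submodule.smul_mem _ _ (Submodule.subset_span ⟨(k, v), rfl⟩)

lemma NItheta_anti (m m' : NIMod V) :
    NItheta V m * NItheta V m' + NItheta V m' * NItheta V m = 0 := by
  have hm : m ∈ Submodule.span ℚ
      (Set.range fun p : ℤ × V => ((T p.1 : LP) ⊗ₜ[ℚ] p.2 : NIMod V)) := by
    rw [NIspan]; trivial
  have hm' : m' ∈ Submodule.span ℚ
      (Set.range fun p : ℤ × V => ((T p.1 : LP) ⊗ₜ[ℚ] p.2 : NIMod V)) := by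
    rw [NIspan]; trivial
  induction hm, hm' using Submodule.span_induction₂ with
  | mem_mem x y hx hy =>
      obtain ⟨⟨k, v⟩, rfl⟩ := hx
      obtain ⟨⟨l, w⟩, rfl⟩ := hy
      rw [NItheta_T, NItheta_T, Algebra.TensorProduct.tmul_mul_tmul,
        Algebra.TensorProduct.tmul_mul_tmul, mul_comm (T l : LP) (T k),
        ← TensorProduct.tmul_add, ExteriorAlgebra.ι_add_mul_swap, TensorProduct.tmul_zero]
  | zero_left y hy => simp
  | zero_right x hx => simp
  | add_left x y z hx hy hz h1 h2 =>
      rw [map_add, add_mul, mul_add, add_add_add_comm, h1, h2, add_zero]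
  | add_right x y z hx hy hz h1 h2 =>
      rw [map_add, add_mul, mul_add, add_add_add_comm, h1, h2, add_zero]
  | smul_left c x y hx hy h =>
      rw [map_smul, smul_mul_assoc, mul_smul_comm, ← smul_add, h, smul_zero]
  | smul_right c x y hx hy h =>
      rw [map_smul, smul_mul_assoc, mul_smul_comm, ← smul_add, h, smul_zero]

lemma NItheta_sq (m : NIMod V) : NItheta V m * NItheta V m = 0 := by
  have h := NItheta_anti V m m
  have h2 : (2 : ℚ) • (NItheta V m * NItheta V m) = 0 := by
    rw [two_smul]; exact h
  have := smul_eq_zero.mp h2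
  simpa using this

/-- The algebra map `Θ : Λ M → L ⊗ Λ M` extending `θ`. -/
def NITheta : NIExt V →ₐ[ℚ] LP ⊗[ℚ] NIExt V :=
  ExteriorAlgebra.lift ℚ ⟨NItheta V, NItheta_sq V⟩

lemma NITheta_ι (m : NIMod V) : NITheta V (ExteriorAlgebra.ι ℚ m) = NItheta V m := by
  rw [NITheta]
  exact ExteriorAlgebra.lift_ι_apply (R := ℚ) (f := NItheta V) (cond := NItheta_sq V) m

/-- Evaluation at `t = 1`, as an algebra map `L → ℚ`. -/
def NIev : LP →ₐ[ℚ] ℚ := AddMonoidAlgebra.lift ℚ ℚ ℤ (1 : Multiplicative ℤ →* ℚ)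

lemma NIev_T (k : ℤ) : NIev (T k) = 1 := by
  rw [NIev, LaurentPolynomial.T]
  erw [AddMonoidAlgebra.lift_single]
  simp

lemma NIeps_comm (f : LP) (e : NIExt V) :
    Commute (((Algebra.ofId ℚ (NIExt V)).comp NIev) f) ((AlgHom.id ℚ (NIExt V)) e) :=
  Algebra.commute_algebraMap_left (NIev f) e

/-- The counit `ε : L ⊗ Λ M → Λ M`, evaluation at `t = 1` on the first factor. -/
def NIeps : (LP ⊗[ℚ] NIExt V) →ₐ[ℚ] NIExt V :=
  Algebra.TensorProduct.lift ((Algebra.ofId ℚ (NIExt V)).comp NIev) (AlgHom.id ℚ _)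
    (NIeps_comm V)

lemma NIeps_theta (m : NIMod V) : NIeps V (NItheta V m) = ExteriorAlgebra.ι ℚ m := by
  have hm : m ∈ Submodule.span ℚ
      (Set.range fun p : ℤ × V => ((T p.1 : LP) ⊗ₜ[ℚ] p.2 : NIMod V)) := by
    rw [NIspan]; trivial
  induction hm using Submodule.span_induction with
  | mem x hx =>
      obtain ⟨⟨k, v⟩, rfl⟩ := hx
      rw [NItheta_T, NIeps, Algebra.TensorProduct.lift_tmul]
      simp [NIev_T, Algebra.ofId_apply]
  | zero => simp
  | add x y hx hy h1 h2 => rw [map_add, map_add, map_add, h1, h2]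
  | smul c x hx h => rw [map_smul, map_smul, map_smul, h]

lemma NIeps_Theta (x : NIExt V) : NIeps V (NITheta V x) = x := by
  induction x using ExteriorAlgebra.induction with
  | algebraMap r => rw [AlgHom.commutes, AlgHom.commutes]
  | ι m => rw [NITheta_ι, NIeps_theta]
  | mul a b ha hb => rw [map_mul, map_mul, ha, hb]
  | add a b ha hb => rw [map_add, map_add, ha, hb]

/-- The map `φ : M → M`, multiplication by `t` on the Laurent factor. -/
def NIphi : NIMod V →ₗ[ℚ] NIMod V :=
  TensorProduct.map (LinearMap.mulLeft ℚ (T 1 : LP)) (LinearMap.id : V →ₗ[ℚ] V)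

/-- The induced algebra map `ψ = Λ φ`. -/
def NIpsi : NIExt V →ₐ[ℚ] NIExt V := ExteriorAlgebra.map (NIphi V)

lemma NIphi_T (k : ℤ) (v : V) :
    NIphi V ((T k : LP) ⊗ₜ[ℚ] v) = (T (1 + k) : LP) ⊗ₜ[ℚ] v := by
  rw [NIphi, TensorProduct.map_tmul, LinearMap.mulLeft_apply, LinearMap.id_apply, ← T_add]

/-- The shift operator on `L ⊗ Λ M`: multiplication by `t^n` on the first factor and
`ψ` on the second. -/
def NIPsi (n : ℕ) : (LP ⊗[ℚ] NIExt V) →ₗ[ℚ] LP ⊗[ℚ] NIExt V :=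
  TensorProduct.map (LinearMap.mulLeft ℚ (T (n : ℤ) : LP)) (NIpsi V).toLinearMap

lemma NITheta_iMulti (n : ℕ) (k : Fin n → ℤ) (m : Fin n → V) :
    NITheta V (ExteriorAlgebra.ιMulti ℚ n fun j => ((T (k j) : LP) ⊗ₜ[ℚ] m j : NIMod V))
      = (T (∑ j, k j) : LP) ⊗ₜ[ℚ]
          ExteriorAlgebra.ιMulti ℚ n (fun j => ((T (k j) : LP) ⊗ₜ[ℚ] m j : NIMod V)) := by
  induction n with
  | zero =>
      rw [ExteriorAlgebra.ιMulti_zero_apply, map_one]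
      rw [show (∑ j : Fin 0, k j) = 0 from Finset.sum_empty, T_zero,
        Algebra.TensorProduct.one_def]
  | succ n ih =>
      rw [ExteriorAlgebra.ιMulti_succ_apply, map_mul, NITheta_ι, NItheta_T]
      have htail : (Matrix.vecTail fun j => ((T (k j) : LP) ⊗ₜ[ℚ] m j : NIMod V))
          = fun j => ((T (Matrix.vecTail k j) : LP) ⊗ₜ[ℚ] Matrix.vecTail m j : NIMod V) := rfl
      rw [htail, ih, Algebra.TensorProduct.tmul_mul_tmul, ← T_add]
      have hsum : (k 0 + ∑ j : Fin n, Matrix.vecTail k j) = ∑ j, k j := by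
        rw [Fin.sum_univ_succ]
        rfl
      simp only [hsum]

lemma NITheta_psi (n : ℕ) (z : NIExt V) (hz : z ∈ ⋀[ℚ]^n (NIMod V)) :
    NITheta V (NIpsi V z) = NIPsi V n (NITheta V z) := by
  rw [← ExteriorAlgebra.ιMulti_span_fixedDegree] at hz
  induction hz using Submodule.span_induction with
  | zero => simp
  | add a b _ _ h1 h2 => simp only [map_add, h1, h2]
  | smul c a _ h => simp only [map_smul, h]
  | mem z hz =>
      obtain ⟨v, rfl⟩ := hz
      let bV := Module.Basis.ofVectorSpace ℚ V
      let bL : Module.Basis ℤ ℚ LP := AddMonoidAlgebra.basis ℤ ℚ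
      let b := bL.tensorProduct bV
      let F : MultilinearMap ℚ (fun _ : Fin n => NIMod V) (LP ⊗[ℚ] NIExt V) :=
        ((NITheta V).toLinearMap ∘ₗ (NIpsi V).toLinearMap).compMultilinearMap
          (ExteriorAlgebra.ιMulti ℚ n).toMultilinearMap
      let G : MultilinearMap ℚ (fun _ : Fin n => NIMod V) (LP ⊗[ℚ] NIExt V) :=
        ((NIPsi V n) ∘ₗ (NITheta V).toLinearMap).compMultilinearMap
          (ExteriorAlgebra.ιMulti ℚ n).toMultilinearMap
      have hFG : F = G := by
        apply Module.Basis.ext_multilinear (fun _ => b)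
        intro w
        have hb : ∀ i : Fin n, b (w i) = (T (w i).1 : LP) ⊗ₜ[ℚ] (bV (w i).2 : V) := by
          intro i
          rw [Module.Basis.tensorProduct_apply']
          congr 1
        show NITheta V (NIpsi V (ExteriorAlgebra.ιMulti ℚ n fun i => b (w i)))
          = NIPsi V n (NITheta V (ExteriorAlgebra.ιMulti ℚ n fun i => b (w i)))
        simp only [hb]
        rw [NIpsi, ExteriorAlgebra.map_apply_ιMulti]
        have hcomp : (NIphi V ∘ fun i => (T (w i).1 : LP) ⊗ₜ[ℚ] (bV (w i).2 : V))
            = fun i => ((T (1 + (w i).1) : LP) ⊗ₜ[ℚ] (bV (w i).2 : V) : NIMod V) := by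
          funext i
          exact NIphi_T V _ _
        rw [hcomp, NITheta_iMulti, NITheta_iMulti, NIPsi, TensorProduct.map_tmul,
          LinearMap.mulLeft_apply, ← T_add]
        have hsum : (∑ j : Fin n, (1 + (w j).1)) = (n : ℤ) + ∑ j : Fin n, (w j).1 := by
          rw [Finset.sum_add_distrib, Finset.sum_const, Finset.card_univ, Fintype.card_fin]
          simp
        rw [hsum]
        congr 1
        show _ = ExteriorAlgebra.map (NIphi V) _
        rw [ExteriorAlgebra.map_apply_ιMulti, hcomp]
      exact DFunLike.congr_fun hFG v

/-- Coefficient extraction `L ⊗ Λ M ≃ (ℤ →₀ Λ M)`. -/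
def NIfs : (LP ⊗[ℚ] NIExt V) ≃ₗ[ℚ] (ℤ →₀ NIExt V) :=
  (TensorProduct.congr (AddMonoidAlgebra.coeffLinearEquiv ℚ : LP ≃ₗ[ℚ] (ℤ →₀ ℚ))
    (LinearEquiv.refl ℚ (NIExt V))).trans (TensorProduct.finsuppScalarLeft ℚ (NIExt V) ℤ)

lemma NIshift (n : ℕ) (y : LP ⊗[ℚ] NIExt V) (kk : ℤ) :
    NIfs V (NIPsi V n y) kk
      = NIpsi V (NIfs V y (kk - n)) := by
  induction y using TensorProduct.induction_on with
  | zero =>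
      rw [map_zero (NIPsi V n), (NIfs V).map_zero,
        Finsupp.coe_zero, Pi.zero_apply, Pi.zero_apply, map_zero (NIpsi V)]
  | add a b ha hb =>
      rw [map_add (NIPsi V n), (NIfs V).map_add,
        (NIfs V).map_add,
        Finsupp.add_apply, Finsupp.add_apply, ha, hb, map_add (NIpsi V)]
  | tmul f e =>
      rw [NIPsi, TensorProduct.map_tmul, NIfs, LinearEquiv.trans_apply, LinearEquiv.trans_apply,
        TensorProduct.congr_tmul, TensorProduct.congr_tmul, LinearEquiv.refl_apply,
        LinearEquiv.refl_apply, TensorProduct.finsuppScalarLeft_apply_tmul_apply,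
        TensorProduct.finsuppScalarLeft_apply_tmul_apply, LinearMap.mulLeft_apply]
      have hc : (AddMonoidAlgebra.coeffLinearEquiv ℚ ((T (n : ℤ) : LP) * f) : ℤ →₀ ℚ) kk
          = (AddMonoidAlgebra.coeffLinearEquiv ℚ f : ℤ →₀ ℚ) (kk - n) := by
        rw [AddMonoidAlgebra.coeffLinearEquiv_apply, AddMonoidAlgebra.coeffLinearEquiv_apply,
          LaurentPolynomial.T]
        erw [AddMonoidAlgebra.coeff_single_mul_apply]
        rw [one_mul, neg_add_eq_sub]
      rw [hc, map_smul]
      rfl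

end NoInvAux

/-- For the free `ℚ[C]`-module `M = ℚ[t,t⁻¹] ⊗ V` on a finite-dimensional `ℚ`-vector
space `V`, and any `n ≥ 1`, the `n`-th exterior power `Λⁿ M` has no nonzero invariants
under the (diagonal) action of `t`; equivalently `H₁(C, Λⁿ M) = 0` for the infinite
cyclic group `C = ⟨t⟩`. -/
theorem exteriorPower_laurent_tensor_no_invariants
    (V : Type) [AddCommGroup V] [Module ℚ V] [FiniteDimensional ℚ V]
    (n : ℕ) (hn : 1 ≤ n)
    (x : ExteriorAlgebra ℚ (LaurentPolynomial ℚ ⊗[ℚ] V))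
    (hx : x ∈ ⋀[ℚ]^n (LaurentPolynomial ℚ ⊗[ℚ] V))
    (hinv : ExteriorAlgebra.map
      (TensorProduct.map (LinearMap.mulLeft ℚ (LaurentPolynomial.T 1))
        (LinearMap.id : V →ₗ[ℚ] V)) x = x) :
    x = 0 := by
  classical
  have hinv' : NIpsi V x = x := hinv
  have hkey : NITheta V x = NIPsi V n (NITheta V x) := by
    conv_lhs => rw [← hinv']
    exact NITheta_psi V n x hx
  set Y : ℤ →₀ ExteriorAlgebra ℚ (LaurentPolynomial ℚ ⊗[ℚ] V) :=
    NIfs V (NITheta V x) with hYdef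
  have hrec : ∀ kk : ℤ, Y kk = NIpsi V (Y (kk - n)) := by
    intro kk
    rw [hYdef]
    conv_lhs => rw [hkey]
    exact NIshift V n (NITheta V x) kk
  have hY0 : Y = 0 := by
    by_contra h
    have hne : Y.support.Nonempty := Finsupp.support_nonempty_iff.mpr h
    set k := Y.support.min' hne with hk
    have hk1 : Y k ≠ 0 := Finsupp.mem_support_iff.mp (Y.support.min'_mem hne)
    have hk2 : Y (k - n) = 0 := by
      by_contra h3
      have hmem : k - (n : ℤ) ∈ Y.support := Finsupp.mem_support_iff.mpr h3
      have := Y.support.min'_le _ hmem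
      omega
    exact hk1 (by rw [hrec k, hk2, map_zero])
  have hT0 : NITheta V x = 0 := by
    have := (LinearEquiv.map_eq_zero_iff (NIfs V)).mp hY0
    exact this
  calc x = NIeps V (NITheta V x) := (NIeps_Theta V x).symm
    _ = 0 := by rw [hT0, map_zero]
end
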